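/- Let Ω ⊆ ℝ^N be a nonempty open set, let (ε_n) be a sequence of positive reals converging to 0, let u_n : Ω → ℂ be measurable functions converging almost everywhere on Ω to a function u, and let U : Ω → ℂ be measurable with |U(x)| ≤ 1 for almost every x ∈ Ω. Assume that for every Lebesgue integrable h : Ω → ℂ one has ∫_Ω ( u_n(x)/(|u_n(x)|² + ε_n)^{1/2} ) · conj(h(x)) dx → ∫_Ω U(x) · conj(h(x)) dx as n → ∞. Then U(x) = u(x)/|u(x)| for almost every x ∈ Ω with u(x) ≠ 0. -/

import Mathlib

open MeasureTheory Filter Topology Complex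

/-- Pointwise convergence of the regularized sections at points where the limit is nonzero. -/
lemma gconv_aux (ε : ℕ → ℝ) (hε0 : Tendsto ε atTop (𝓝 0))
    (z : ℕ → ℂ) (w : ℂ) (hw : w ≠ 0) (hz : Tendsto z atTop (𝓝 w)) :
    Tendsto (fun n => z n / ((Real.sqrt (‖z n‖ ^ 2 + ε n) : ℝ) : ℂ)) atTop
      (𝓝 (w / (‖w‖ : ℂ))) := by
  have hden : Tendsto (fun n => Real.sqrt (‖z n‖ ^ 2 + ε n)) atTop (𝓝 ‖w‖) := by
    have h1 : Tendsto (fun n => ‖z n‖ ^ 2 + ε n) atTop (𝓝 (‖w‖ ^ 2 + 0)) :=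
      (((hz.norm).pow 2)).add hε0
    have := (Real.continuous_sqrt.tendsto _).comp h1
    simpa [Function.comp_def, Real.sqrt_sq (norm_nonneg w)] using this
  have hdenC : Tendsto (fun n => ((Real.sqrt (‖z n‖ ^ 2 + ε n) : ℝ) : ℂ)) atTop
      (𝓝 ((‖w‖ : ℝ) : ℂ)) := (Complex.continuous_ofReal.tendsto _).comp hden
  exact hz.div hdenC (by simpa using norm_ne_zero_iff.2 hw)

/-- The regularized sections are bounded by 1. -/
lemma gbound_aux (e : ℝ) (he : 0 < e) (z : ℂ) :
    ‖z / ((Real.sqrt (‖z‖ ^ 2 + e) : ℝ) : ℂ)‖ ≤ 1 := by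
  have hs : ‖z‖ ≤ Real.sqrt (‖z‖ ^ 2 + e) := by
    have h0 : ‖z‖ = Real.sqrt (‖z‖ ^ 2) := (Real.sqrt_sq (norm_nonneg z)).symm
    rw [h0]
    exact Real.sqrt_le_sqrt (by nlinarith [Real.sq_sqrt (norm_nonneg z)])
  have hs0 : 0 ≤ Real.sqrt (‖z‖ ^ 2 + e) := Real.sqrt_nonneg _
  rcases eq_or_lt_of_le hs0 with h0 | h0
  · rw [← h0, Complex.ofReal_zero, div_zero, norm_zero]; norm_num
  · rw [norm_div, Complex.norm_real, Real.norm_of_nonneg hs0, div_le_one h0]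
    exact hs

lemma conj_meas_aux {α : Type*} [MeasurableSpace α] {f : α → ℂ} (hf : Measurable f) :
    Measurable fun x => (starRingEnd ℂ) (f x) :=
  (RCLike.continuous_conj (K := ℂ)).measurable.comp hf

theorem weakStar_limit_saturated_section
    (N : ℕ) (Ω : Set (EuclideanSpace ℝ (Fin N))) (hΩ : IsOpen Ω) (hΩne : Ω.Nonempty)
    (ε : ℕ → ℝ) (hε : ∀ n, 0 < ε n) (hε0 : Tendsto ε atTop (𝓝 0))
    (un : ℕ → EuclideanSpace ℝ (Fin N) → ℂ) (hm : ∀ n, Measurable (un n))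
    (u U : EuclideanSpace ℝ (Fin N) → ℂ) (hUm : Measurable U)
    (hconv : ∀ᵐ x ∂(volume.restrict Ω), Tendsto (fun n => un n x) atTop (𝓝 (u x)))
    (hUb : ∀ᵐ x ∂(volume.restrict Ω), ‖U x‖ ≤ 1)
    (hweak : ∀ h : EuclideanSpace ℝ (Fin N) → ℂ, IntegrableOn h Ω volume →
      Tendsto
        (fun n => ∫ x in Ω,
          (un n x / ((Real.sqrt (‖un n x‖ ^ 2 + ε n) : ℝ) : ℂ)) * (starRingEnd ℂ) (h x))
        atTop (𝓝 (∫ x in Ω, U x * (starRingEnd ℂ) (h x)))) :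
    ∀ᵐ x ∂(volume.restrict Ω), u x ≠ 0 → U x = u x / (‖u x‖ : ℂ) := by
  set μ := volume.restrict Ω with hμ
  -- u is a.e. measurable; take a measurable representative u'
  have huae : AEMeasurable u μ :=
    aemeasurable_of_tendsto_metrizable_ae atTop (fun n => (hm n).aemeasurable) hconv
  obtain ⟨u', hu'm, hu'⟩ := huae
  -- main claim on each ball
  have key : ∀ R : ℕ, ∀ᵐ x ∂μ,
      x ∈ ({x | u' x ≠ 0} ∩ Metric.closedBall 0 R) → U x = u' x / (‖u' x‖ : ℂ) := by
    intro R
    set S : Set (EuclideanSpace ℝ (Fin N)) := {x | u' x ≠ 0} ∩ Metric.closedBall 0 R with hS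
    have hSm : MeasurableSet S :=
      ((hu'm (measurableSet_singleton 0)).compl).inter measurableSet_closedBall
    set h : EuclideanSpace ℝ (Fin N) → ℂ :=
      S.indicator (fun x => U x - u' x / (‖u' x‖ : ℂ)) with hh
    have hhm : Measurable h :=
      Measurable.indicator
        (hUm.sub (hu'm.div (Complex.measurable_ofReal.comp hu'm.norm))) hSm
    -- the dominating bound
    set b : EuclideanSpace ℝ (Fin N) → ℝ :=
      (Metric.closedBall (0 : EuclideanSpace ℝ (Fin N)) R).indicator (fun _ => (2:ℝ)) with hb
    have hbnn : ∀ x, 0 ≤ b x := fun x =>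
      Set.indicator_nonneg (fun _ _ => by norm_num) x
    have hbint : Integrable b μ := by
      rw [hb, integrable_indicator_iff measurableSet_closedBall]
      refine integrableOn_const (ne_of_lt ?_) (by simp)
      calc μ (Metric.closedBall 0 R)
          ≤ volume (Metric.closedBall (0:EuclideanSpace ℝ (Fin N)) R) :=
            Measure.restrict_apply_le _ _
        _ < ⊤ := (isCompact_closedBall _ _).measure_lt_top
    have hbd : ∀ᵐ x ∂μ, ‖h x‖ ≤ b x := by
      filter_upwards [hUb] with x hx
      rw [hh, hb]
      by_cases hxS : x ∈ S
      · rw [Set.indicator_of_mem hxS, Set.indicator_of_mem hxS.2]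
        have h1 : ‖u' x / (‖u' x‖ : ℂ)‖ = 1 := by
          rw [norm_div, Complex.norm_real, Real.norm_of_nonneg (norm_nonneg _),
            div_self (norm_ne_zero_iff.2 hxS.1)]
        calc ‖U x - u' x / (‖u' x‖ : ℂ)‖
            ≤ ‖U x‖ + ‖u' x / (‖u' x‖ : ℂ)‖ := norm_sub_le _ _
          _ ≤ 2 := by rw [h1]; linarith
      · rw [Set.indicator_of_notMem hxS]
        simpa using hbnn x
    have hhi : Integrable h μ := Integrable.mono' hbint hhm.aestronglyMeasurable hbd
    have T1 := hweak h hhi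
    -- limit function for dominated convergence
    set L : EuclideanSpace ℝ (Fin N) → ℂ :=
      fun x => (S.indicator (fun x => u' x / (‖u' x‖ : ℂ)) x) * (starRingEnd ℂ) (h x) with hL
    have T2 : Tendsto
        (fun n => ∫ x in Ω,
          (un n x / ((Real.sqrt (‖un n x‖ ^ 2 + ε n) : ℝ) : ℂ)) * (starRingEnd ℂ) (h x))
        atTop (𝓝 (∫ x, L x ∂μ)) := by
      apply tendsto_integral_of_dominated_convergence b
      · intro n
        exact (((hm n).div (Complex.measurable_ofReal.comp
          (Real.continuous_sqrt.measurable.comp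
            (((hm n).norm.pow_const 2).add_const (ε n))))).mul
          (conj_meas_aux hhm)).aestronglyMeasurable
      · exact hbint
      · intro n
        filter_upwards [hbd] with x hx
        calc ‖(un n x / ((Real.sqrt (‖un n x‖ ^ 2 + ε n) : ℝ) : ℂ)) * (starRingEnd ℂ) (h x)‖
            = ‖un n x / ((Real.sqrt (‖un n x‖ ^ 2 + ε n) : ℝ) : ℂ)‖ * ‖h x‖ := by
              rw [norm_mul, RCLike.norm_conj]
          _ ≤ 1 * ‖h x‖ :=
              mul_le_mul_of_nonneg_right (gbound_aux (ε n) (hε n) _) (norm_nonneg _)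
          _ = ‖h x‖ := one_mul _
          _ ≤ b x := hx
      · filter_upwards [hconv, hu'] with x hx hx'
        by_cases hxS : x ∈ S
        · rw [hL]
          simp only [Set.indicator_of_mem hxS]
          exact (gconv_aux ε hε0 (fun n => un n x) (u' x) hxS.1
            (by rw [← hx']; exact hx)).mul_const _
        · have hhx : h x = 0 := by rw [hh, Set.indicator_of_notMem hxS]
          rw [hL]
          simp only [hhx, map_zero, mul_zero]
          exact tendsto_const_nhds
    have heq : (∫ x in Ω, U x * (starRingEnd ℂ) (h x)) = ∫ x, L x ∂μ :=
      tendsto_nhds_unique T1 T2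
    -- integrability of the two integrands
    have hint2 : Integrable (fun x => U x * (starRingEnd ℂ) (h x)) μ := by
      apply Integrable.mono' hbint
        ((hUm.mul (conj_meas_aux hhm)).aestronglyMeasurable)
      filter_upwards [hUb, hbd] with x hx1 hx2
      simp only [Pi.mul_apply]
      rw [norm_mul, RCLike.norm_conj]
      calc ‖U x‖ * ‖h x‖ ≤ 1 * ‖h x‖ := mul_le_mul_of_nonneg_right hx1 (norm_nonneg _)
        _ = ‖h x‖ := one_mul _
        _ ≤ b x := hx2
    have hLm : Measurable L :=
      (Measurable.indicator (hu'm.div (Complex.measurable_ofReal.comp hu'm.norm)) hSm).mul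
        (conj_meas_aux hhm)
    have hintL : Integrable L μ := by
      apply Integrable.mono' hbint hLm.aestronglyMeasurable
      filter_upwards [hbd] with x hx
      rw [hL]
      simp only
      rw [norm_mul, RCLike.norm_conj]
      by_cases hxS : x ∈ S
      · rw [Set.indicator_of_mem hxS]
        have h1 : ‖u' x / (‖u' x‖ : ℂ)‖ = 1 := by
          rw [norm_div, Complex.norm_real, Real.norm_of_nonneg (norm_nonneg _),
            div_self (norm_ne_zero_iff.2 hxS.1)]
        rw [h1, one_mul]
        exact hx
      · rw [Set.indicator_of_notMem hxS, norm_zero, zero_mul]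
        exact hbnn x
    -- pointwise identity:  U * conj h - L = h * conj h
    have hpt : ∀ x, h x * (starRingEnd ℂ) (h x)
        = U x * (starRingEnd ℂ) (h x) - L x := by
      intro x
      by_cases hxS : x ∈ S
      · rw [hL]
        simp only [Set.indicator_of_mem hxS]
        rw [hh]
        simp only [Set.indicator_of_mem hxS]
        ring
      · have hhx : h x = 0 := by rw [hh, Set.indicator_of_notMem hxS]
        have hLx : L x = 0 := by rw [hL]; simp [hhx]
        rw [hhx, hLx]
        simp
    -- conclude ∫ ‖h‖² = 0
    have hzero : (∫ x, h x * (starRingEnd ℂ) (h x) ∂μ) = 0 := by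
      simp_rw [hpt]
      rw [integral_sub hint2 hintL]
      rw [← heq]
      exact sub_self _
    have hmulint : Integrable (fun x => h x * (starRingEnd ℂ) (h x)) μ :=
      (hint2.sub hintL).congr (Eventually.of_forall fun x => (hpt x).symm)
    have hns : (∫ x, (Complex.normSq (h x) : ℝ) ∂μ) = 0 := by
      have h1 := integral_re (𝕜 := ℂ) hmulint
      rw [hzero] at h1
      simp only [map_zero] at h1
      rw [← h1]
      congr 1
      funext x
      rw [Complex.mul_conj]
      simp [RCLike.re_to_complex]
    have hnsint : Integrable (fun x => (Complex.normSq (h x) : ℝ)) μ := by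
      apply Integrable.mono' (hbint.const_mul 2)
        ((Complex.continuous_normSq.measurable.comp hhm).aestronglyMeasurable)
      filter_upwards [hbd] with x hx
      show ‖Complex.normSq (h x)‖ ≤ 2 * b x
      have hb2 : b x ≤ 2 := by
        rw [hb]
        by_cases hxB : x ∈ Metric.closedBall (0:EuclideanSpace ℝ (Fin N)) (R:ℝ) <;>
          simp [Set.indicator_apply, hxB]
      have h2 : ‖h x‖ ≤ 2 := hx.trans hb2
      rw [Real.norm_of_nonneg (Complex.normSq_nonneg _), Complex.normSq_eq_norm_sq]
      calc ‖h x‖ ^ 2 = ‖h x‖ * ‖h x‖ := by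
            rw [sq]
        _ ≤ 2 * b x := mul_le_mul h2 hx (norm_nonneg _) (by norm_num)
    have hae : ∀ᵐ x ∂μ, (Complex.normSq (h x) : ℝ) = 0 := by
      have := (integral_eq_zero_iff_of_nonneg
        (fun x => Complex.normSq_nonneg (h x)) hnsint).1 hns
      filter_upwards [this] with x hx using hx
    filter_upwards [hae] with x hx hxS
    have hhx : h x = 0 := Complex.normSq_eq_zero.1 hx
    rw [hh, Set.indicator_of_mem hxS] at hhx
    exact sub_eq_zero.1 hhx
  -- combine over all R and pass from u' back to u
  have hAll : ∀ᵐ x ∂μ, ∀ R : ℕ,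
      x ∈ ({x | u' x ≠ 0} ∩ Metric.closedBall 0 R) → U x = u' x / (‖u' x‖ : ℂ) :=
    ae_all_iff.2 key
  filter_upwards [hAll, hu'] with x hx hx' hu0
  have hu'0 : u' x ≠ 0 := by rw [← hx']; exact hu0
  have hxB : x ∈ Metric.closedBall (0 : EuclideanSpace ℝ (Fin N)) (⌈‖x‖⌉₊ : ℕ) := by
    rw [Metric.mem_closedBall, dist_zero_right]
    exact Nat.le_ceil _
  have := hx ⌈‖x‖⌉₊ ⟨hu'0, hxB⟩
  rw [this, ← hx']
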